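/- Let D be a positive linear contraction on L^∞(X, μ) for a probability measure μ, satisfying D1 = 1 and ∫ Df dμ = ∫ f dμ for all bounded measurable f. Suppose μ is ergodic in the sense that every bounded measurable f with Df = f μ-a.e. is constant μ-a.e. Then for every f ∈ L¹(X, μ), the averages (1/n)·Σ_{k=0}^{n−1} D^k f converge μ-almost everywhere to the constant ∫ f dμ. -/

import Mathlib

open Filter MeasureTheory Topology

namespace Stmt14

variable {X : Type*} [MeasurableSpace X]

structure Mk (μ : Measure X) (D : (X → ℝ) → (X → ℝ)) : Prop where
  hadd : ∀ f g : X → ℝ, D (f + g) = D f + D g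
  hsmul : ∀ (c : ℝ) (f : X → ℝ), D (c • f) = c • D f
  hpos : ∀ f : X → ℝ, (∀ x, 0 ≤ f x) → ∀ x, 0 ≤ D f x
  hmeas : ∀ f : X → ℝ, Measurable f → Measurable (D f)
  hcongr : ∀ f g : X → ℝ, f =ᵐ[μ] g → D f =ᵐ[μ] D g
  hone : D (fun _ => 1) = fun _ => 1
  hpreserve : ∀ f : X → ℝ, Integrable f μ →
      Integrable (D f) μ ∧ ∫ x, D f x ∂μ = ∫ x, f x ∂μ
  hergodic : ∀ f : X → ℝ, Measurable f → (∃ c : ℝ, ∀ x, |f x| ≤ c) →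
      D f =ᵐ[μ] f → ∃ c : ℝ, f =ᵐ[μ] fun _ => c

variable {μ : Measure X} {D : (X → ℝ) → (X → ℝ)}

lemma Mk.zero (H : Mk μ D) : D 0 = 0 := by
  have := H.hsmul 0 0
  simpa using this

lemma Mk.addfun (H : Mk μ D) (f g : X → ℝ) (x : X) : D (fun y => f y + g y) x = D f x + D g x := by
  have := H.hadd f g
  have h2 : (fun y => f y + g y) = f + g := rfl
  rw [h2, this]; rfl

lemma Mk.sub (H : Mk μ D) (f g : X → ℝ) : D (f - g) = D f - D g := by
  have h := H.hadd (f - g) g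
  simp only [sub_add_cancel] at h
  rw [h]; abel

lemma Mk.neg (H : Mk μ D) (f : X → ℝ) : D (-f) = - D f := by
  have := H.hsmul (-1) f
  simpa using this

lemma Mk.smulfun (H : Mk μ D) (c : ℝ) (f : X → ℝ) (x : X) : D (fun y => c * f y) x = c * D f x := by
  have := H.hsmul c f
  have h2 : (fun y => c * f y) = c • f := rfl
  rw [h2, this]; rfl

lemma Mk.const (H : Mk μ D) (c : ℝ) : D (fun _ => c) = fun _ => c := by
  have h1 := H.hsmul c (fun _ => (1:ℝ))
  have h2 : (fun _ : X => c) = c • (fun _ : X => (1:ℝ)) := by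
    funext x; simp [Pi.smul_apply]
  rw [h2, h1, H.hone]

lemma Mk.mono (H : Mk μ D) {f g : X → ℝ} (h : ∀ x, f x ≤ g x) : ∀ x, D f x ≤ D g x := by
  intro x
  have h0 : ∀ y, 0 ≤ D (g - f) y := H.hpos _ (fun y => by simpa using sub_nonneg.2 (h y))
  have := h0 x
  rw [H.sub] at this
  simpa [sub_nonneg] using this

lemma Mk.sum (H : Mk μ D) (s : Finset ℕ) (F : ℕ → X → ℝ) :
    D (fun x => ∑ k ∈ s, F k x) = fun x => ∑ k ∈ s, D (F k) x := by
  induction s using Finset.cons_induction with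
  | empty => simp only [Finset.sum_empty]; exact H.zero
  | cons a s ha ih =>
      funext x
      simp only [Finset.sum_cons]
      rw [H.addfun (F a) (fun y => ∑ k ∈ s, F k y), ih]

lemma Mk.iter_meas (H : Mk μ D) {f : X → ℝ} (hf : Measurable f) (k : ℕ) : Measurable (D^[k] f) := by
  induction k with
  | zero => simpa using hf
  | succ n ih => rw [Function.iterate_succ_apply']; exact H.hmeas _ ih

lemma Mk.iter_int (H : Mk μ D) {f : X → ℝ} (hf : Integrable f μ) (k : ℕ) :
    Integrable (D^[k] f) μ ∧ ∫ x, D^[k] f x ∂μ = ∫ x, f x ∂μ := by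
  induction k with
  | zero => simpa using hf
  | succ n ih =>
      rw [Function.iterate_succ_apply']
      exact ⟨(H.hpreserve _ ih.1).1, by rw [(H.hpreserve _ ih.1).2, ih.2]⟩

lemma Mk.iter_add (H : Mk μ D) (f g : X → ℝ) (k : ℕ) : D^[k] (f + g) = D^[k] f + D^[k] g := by
  induction k with
  | zero => rfl
  | succ n ih => simp only [Function.iterate_succ_apply', ih, H.hadd]

lemma Mk.iter_const (H : Mk μ D) (c : ℝ) (k : ℕ) : D^[k] (fun _ => c) = fun _ => c := by
  induction k with
  | zero => rfl
  | succ n ih => rw [Function.iterate_succ_apply', ih, H.const]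

lemma Mk.iter_congr (H : Mk μ D) {f g : X → ℝ} (h : f =ᵐ[μ] g) (k : ℕ) : D^[k] f =ᵐ[μ] D^[k] g := by
  induction k with
  | zero => simpa using h
  | succ n ih =>
      rw [Function.iterate_succ_apply', Function.iterate_succ_apply']
      exact H.hcongr _ _ ih

/-- Cauchy–Schwarz pointwise: (D f)² ≤ D (f²). -/
lemma Mk.sq_le (H : Mk μ D) (f : X → ℝ) (x : X) : (D f x)^2 ≤ D (fun y => (f y)^2) x := by
  have key : ∀ t : ℝ, 0 ≤ D (fun y => (f y)^2) x + 2 * t * D f x + t^2 := by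
    intro t
    have h0 : ∀ y, 0 ≤ (f y + t)^2 := fun y => sq_nonneg _
    have := H.hpos (fun y => (f y + t)^2) h0 x
    have hexp : (fun y => (f y + t)^2)
        = fun y => ((fun z => (f z)^2) y + ((fun z => 2 * t * f z) y + (fun _ => t^2) y)) := by
      funext y; ring
    rw [hexp] at this
    rw [H.addfun _ _, H.addfun _ _, H.smulfun, H.const] at this
    dsimp only at this
    linarith
  have := key (- D f x)
  nlinarith

lemma Mk.iter_sq_le (H : Mk μ D) (f : X → ℝ) (k : ℕ) (x : X) :
    (D^[k] f x)^2 ≤ D^[k] (fun y => (f y)^2) x := by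
  induction k generalizing x with
  | zero => simp
  | succ n ih =>
      rw [Function.iterate_succ_apply', Function.iterate_succ_apply']
      calc (D (D^[n] f) x)^2 ≤ D (fun y => (D^[n] f y)^2) x := H.sq_le _ x
        _ ≤ D (D^[n] (fun y => (f y)^2)) x := H.mono (fun y => ih y) x

lemma Mk.iter_sq_int (H : Mk μ D) {f : X → ℝ} (hfm : Measurable f)
    (hf2 : Integrable (fun x => (f x)^2) μ) (k : ℕ) :
    Integrable (fun x => (D^[k] f x)^2) μ ∧
      ∫ x, (D^[k] f x)^2 ∂μ ≤ ∫ x, (f x)^2 ∂μ := by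
  have hint := H.iter_int hf2 k
  have hb : ∀ x, (D^[k] f x)^2 ≤ D^[k] (fun y => (f y)^2) x := H.iter_sq_le f k
  have hmeask : Measurable (fun x => (D^[k] f x)^2) := (H.iter_meas hfm k).pow_const 2
  have hintk : Integrable (fun x => (D^[k] f x)^2) μ := by
    refine hint.1.mono' hmeask.aestronglyMeasurable ?_
    filter_upwards with x
    rw [Real.norm_eq_abs, abs_of_nonneg (sq_nonneg _)]
    exact hb x
  refine ⟨hintk, ?_⟩
  calc ∫ x, (D^[k] f x)^2 ∂μ ≤ ∫ x, D^[k] (fun y => (f y)^2) x ∂μ :=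
        integral_mono hintk hint.1 hb
    _ = ∫ x, (f x)^2 ∂μ := hint.2

end Stmt14
namespace Stmt14

variable {X : Type*} [MeasurableSpace X]

section Defs

variable (D : (X → ℝ) → (X → ℝ))

/-- Partial sums of iterates. -/
def S (g : X → ℝ) (n : ℕ) : X → ℝ := fun x => ∑ k ∈ Finset.range n, D^[k] g x

/-- Running maximum of `S (n+1)` for `n ≤ N`. -/
def Mx (g : X → ℝ) : ℕ → X → ℝ
  | 0 => S D g 1
  | (N+1) => fun x => max (Mx g N x) (S D g (N+2) x)

end Defs

variable {μ : Measure X} {D : (X → ℝ) → (X → ℝ)}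

lemma S_zero (g : X → ℝ) : S D g 0 = fun _ => 0 := by
  funext x; simp [S]

lemma S_one (g : X → ℝ) : S D g 1 = g := by
  funext x; simp [S]

lemma S_succ (H : Mk μ D) (g : X → ℝ) (n : ℕ) :
    S D g (n+1) = fun x => g x + D (S D g n) x := by
  funext x
  simp only [S, Finset.sum_range_succ']
  have h1 : D (fun y => ∑ k ∈ Finset.range n, D^[k] g y)
      = fun y => ∑ k ∈ Finset.range n, D (D^[k] g) y := H.sum _ _
  have h2 : D (S D g n) x = ∑ k ∈ Finset.range n, D^[k+1] g x := by
    show D (fun y => ∑ k ∈ Finset.range n, D^[k] g y) x = _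
    rw [h1]
    simp only [Function.iterate_succ_apply']
  rw [h2]
  simp [add_comm]

lemma S_meas (H : Mk μ D) {g : X → ℝ} (hg : Measurable g) (n : ℕ) :
    Measurable (S D g n) := by
  apply Finset.measurable_sum
  exact fun k _ => H.iter_meas hg k

lemma S_int (H : Mk μ D) {g : X → ℝ} (hg : Integrable g μ) (n : ℕ) :
    Integrable (S D g n) μ := by
  have : S D g n = fun a => ∑ k ∈ Finset.range n, D^[k] g a := rfl
  rw [this]
  exact integrable_finset_sum _ (fun k _ => (H.iter_int hg k).1)

lemma S_neg (H : Mk μ D) (g : X → ℝ) (n : ℕ) (x : X) : S D (-g) n x = - S D g n x := by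
  have hk : ∀ k : ℕ, D^[k] (-g) = - D^[k] g := by
    intro k
    induction k with
    | zero => rfl
    | succ m ih => rw [Function.iterate_succ_apply', Function.iterate_succ_apply', ih, H.neg]
  simp only [S, hk]
  simp

lemma S_const (H : Mk μ D) (c : ℝ) (n : ℕ) (x : X) : S D (fun _ => c) n x = n * c := by
  simp only [S, H.iter_const]
  simp [mul_comm]

lemma S_sub_const (H : Mk μ D) (g : X → ℝ) (c : ℝ) (n : ℕ) (x : X) :
    S D (fun y => g y - c) n x = S D g n x - n * c := by
  have h : (fun y => g y - c) = g + (fun _ => -c) := by funext y; simp [sub_eq_add_neg]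
  have h2 : ∀ k, D^[k] (g + (fun _ => -c)) = D^[k] g + D^[k] (fun _ => -c) := H.iter_add _ _
  simp only [S, h, h2, H.iter_const]
  simp [Finset.sum_add_distrib, mul_comm, sub_eq_add_neg]

lemma S_le_Mx (g : X → ℝ) {n N : ℕ} (h : n ≤ N) (x : X) :
    S D g (n+1) x ≤ Mx D g N x := by
  induction N with
  | zero => simp_all [Mx, Nat.le_zero.1 h]
  | succ m ih =>
      rcases Nat.le_succ_iff.1 h with h' | h'
      · exact le_trans (ih h') (le_max_left _ _)
      · rw [h']; exact le_max_right _ _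

lemma Mx_exists (g : X → ℝ) (N : ℕ) (x : X) : ∃ n ≤ N, Mx D g N x = S D g (n+1) x := by
  induction N with
  | zero => exact ⟨0, le_refl 0, rfl⟩
  | succ m ih =>
      rcases ih with ⟨n, hn, he⟩
      rcases le_or_gt (S D g (m+2) x) (Mx D g m x) with h | h
      · refine ⟨n, hn.trans (Nat.le_succ m), ?_⟩
        show max (Mx D g m x) (S D g (m+2) x) = _
        rw [max_eq_left h, he]
      · refine ⟨m+1, le_refl _, ?_⟩
        show max (Mx D g m x) (S D g (m+2) x) = _
        rw [max_eq_right h.le]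

lemma Mx_meas (H : Mk μ D) {g : X → ℝ} (hg : Measurable g) (N : ℕ) :
    Measurable (Mx D g N) := by
  induction N with
  | zero => exact S_meas H hg 1
  | succ m ih => exact ih.max (S_meas H hg (m+2))

lemma Mx_int (H : Mk μ D) {g : X → ℝ} (hg : Integrable g μ) (N : ℕ) :
    Integrable (Mx D g N) μ := by
  induction N with
  | zero => exact S_int H hg 1
  | succ m ih => exact ih.sup (S_int H hg (m+2))

lemma Mx_le_of (g : X → ℝ) (N : ℕ) (B : X → ℝ) (x : X)
    (h : ∀ n ≤ N, S D g (n+1) x ≤ B x) : Mx D g N x ≤ B x := by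
  induction N with
  | zero => exact h 0 (le_refl 0)
  | succ m ih =>
      refine max_le (ih fun n hn => h n (hn.trans (Nat.le_succ m))) (h (m+1) (le_refl _))

lemma Mx_mono (g : X → ℝ) {N N' : ℕ} (h : N ≤ N') (x : X) : Mx D g N x ≤ Mx D g N' x := by
  apply Mx_le_of
  intro n hn
  exact S_le_Mx g (hn.trans h) x

/-- Hopf's maximal ergodic lemma. -/
lemma hopf [IsFiniteMeasure μ] (H : Mk μ D) {g : X → ℝ} (hgm : Measurable g) (hgi : Integrable g μ) (N : ℕ) :
    0 ≤ ∫ x in {x | 0 < Mx D g N x}, g x ∂μ := by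
  set E : Set X := {x | 0 < Mx D g N x} with hE
  have hEmeas : MeasurableSet E := measurableSet_lt measurable_const (Mx_meas H hgm N)
  set Mp : X → ℝ := fun x => max (Mx D g N x) 0 with hMp
  have hMpm : Measurable Mp := (Mx_meas H hgm N).max measurable_const
  have hMpi : Integrable Mp μ := (Mx_int H hgi N).sup (integrable_const 0)
  have hMp0 : ∀ x, 0 ≤ Mp x := fun x => le_max_right _ _
  -- key pointwise inequality
  have key : ∀ x, Mx D g N x ≤ g x + D Mp x := by
    intro x
    apply Mx_le_of
    intro n hn
    rw [S_succ H]
    have hSle : ∀ y, S D g n y ≤ Mp y := by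
      intro y
      cases n with
      | zero => simp [S_zero, hMp]
      | succ m =>
          exact le_trans (S_le_Mx g (Nat.le_of_succ_le hn) y) (le_max_left _ _)
    exact add_le_add le_rfl (H.mono hSle x)
  have hDMp := H.hpreserve Mp hMpi
  have hDMp0 : ∀ x, 0 ≤ D Mp x := H.hpos Mp hMp0
  -- ∫ Mp = ∫_E Mp
  have h1 : ∫ x in E, Mp x ∂μ = ∫ x, Mp x ∂μ := by
    apply setIntegral_eq_integral_of_forall_compl_eq_zero
    intro x hx
    have hx2 : Mx D g N x ≤ 0 := le_of_not_gt hx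
    show max (Mx D g N x) 0 = 0
    rw [max_eq_right hx2]
  have h2 : ∫ x in E, Mp x ∂μ = ∫ x in E, Mx D g N x ∂μ := by
    apply setIntegral_congr_fun hEmeas
    intro x hx
    have hx2 : 0 < Mx D g N x := hx
    show max (Mx D g N x) 0 = Mx D g N x
    rw [max_eq_left hx2.le]
  have h3 : ∫ x in E, Mx D g N x ∂μ ≤ ∫ x in E, (g x + D Mp x) ∂μ := by
    apply setIntegral_mono_on ((Mx_int H hgi N).integrableOn)
      ((hgi.add hDMp.1).integrableOn) hEmeas
    exact fun x _ => key x
  have h4 : ∫ x in E, (g x + D Mp x) ∂μ = ∫ x in E, g x ∂μ + ∫ x in E, D Mp x ∂μ :=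
    integral_add hgi.integrableOn hDMp.1.integrableOn
  have h5 : ∫ x in E, D Mp x ∂μ ≤ ∫ x, D Mp x ∂μ :=
    setIntegral_le_integral hDMp.1 (Filter.Eventually.of_forall hDMp0)
  have h6 : ∫ x, D Mp x ∂μ = ∫ x, Mp x ∂μ := hDMp.2
  linarith


/-- Maximal inequality (one-sided). -/
lemma maximal [IsProbabilityMeasure μ] (H : Mk μ D) {g : X → ℝ}
    (hgm : Measurable g) (hgi : Integrable g μ) {lam : ℝ} (hlam : 0 < lam) :
    μ {x | ∃ n : ℕ, lam * (n+1) < S D g (n+1) x} ≤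
      ENNReal.ofReal ((∫ x, |g x| ∂μ) / lam) := by
  set g' : X → ℝ := fun y => g y - lam with hg'
  have hg'm : Measurable g' := hgm.sub measurable_const
  have hg'i : Integrable g' μ := hgi.sub (integrable_const lam)
  have hS' : ∀ n x, S D g' n x = S D g n x - n * lam := S_sub_const H g lam
  -- identify the set as an increasing union
  have hset : {x | ∃ n : ℕ, lam * (n+1) < S D g (n+1) x}
      = ⋃ N, {x | 0 < Mx D g' N x} := by
    ext x
    simp only [Set.mem_setOf_eq, Set.mem_iUnion]
    constructor
    · rintro ⟨n, hn⟩
      refine ⟨n, lt_of_lt_of_le ?_ (S_le_Mx g' (le_refl n) x)⟩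
      rw [hS']
      push_cast
      linarith
    · rintro ⟨N, hN⟩
      rcases Mx_exists g' N x with ⟨n, _, he⟩
      rw [he, hS'] at hN
      refine ⟨n, ?_⟩
      push_cast at hN ⊢
      linarith
  rw [hset]
  have hmono : Monotone (fun N => {x | 0 < Mx D g' N x}) := by
    intro a b hab x hx
    exact lt_of_lt_of_le hx (Mx_mono g' hab x)
  rw [Monotone.measure_iUnion hmono]
  apply iSup_le
  intro N
  -- Hopf gives 0 ≤ ∫_{E_N} g'
  have hhopf := hopf H hg'm hg'i N
  set E : Set X := {x | 0 < Mx D g' N x} with hE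
  have hEmeas : MeasurableSet E := measurableSet_lt measurable_const (Mx_meas H hg'm N)
  have hsplit : ∫ x in E, g' x ∂μ = ∫ x in E, g x ∂μ - lam * (μ E).toReal := by
    have : ∫ x in E, g' x ∂μ = ∫ x in E, g x ∂μ - ∫ x in E, (fun _ => lam) x ∂μ :=
      integral_sub hgi.integrableOn (integrable_const lam).integrableOn
    rw [this, setIntegral_const, smul_eq_mul, measureReal_def]
    ring
  have habs : ∫ x in E, g x ∂μ ≤ ∫ x, |g x| ∂μ := by
    calc ∫ x in E, g x ∂μ ≤ ∫ x in E, |g x| ∂μ :=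
          setIntegral_mono_on hgi.integrableOn hgi.abs.integrableOn hEmeas
            (fun x _ => le_abs_self _)
      _ ≤ ∫ x, |g x| ∂μ := setIntegral_le_integral hgi.abs
            (Filter.Eventually.of_forall fun x => abs_nonneg _)
  have hbound : lam * (μ E).toReal ≤ ∫ x, |g x| ∂μ := by linarith
  have hfin : μ E ≠ ⊤ := measure_ne_top μ E
  rw [← ENNReal.ofReal_toReal hfin]
  apply ENNReal.ofReal_le_ofReal
  rw [le_div_iff₀ hlam]
  linarith
/-- Frequently-form maximal inequality (two-sided). -/
lemma maximal_freq [IsProbabilityMeasure μ] (H : Mk μ D) {g : X → ℝ}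
    (hgm : Measurable g) (hgi : Integrable g μ) {ε : ℝ} (hε : 0 < ε) :
    μ {x | ∃ᶠ n : ℕ in atTop, ε < |(n : ℝ)⁻¹ * S D g n x|} ≤
      ENNReal.ofReal (2 * (∫ x, |g x| ∂μ) / ε) := by
  set Gp : Set X := {x | ∃ n : ℕ, ε * (n+1) < S D g (n+1) x}
  set Gm : Set X := {x | ∃ n : ℕ, ε * (n+1) < S D (-g) (n+1) x}
  have hsub : {x | ∃ᶠ n : ℕ in atTop, ε < |(n : ℝ)⁻¹ * S D g n x|} ⊆ Gp ∪ Gm := by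
    intro x hx
    rcases (Filter.frequently_atTop.1 hx) 1 with ⟨n, hn1, hn⟩
    obtain ⟨m, rfl⟩ : ∃ m : ℕ, n = m + 1 := ⟨n - 1, by omega⟩
    have hnpos : (0:ℝ) < (m + 1 : ℕ) := by positivity
    have h1 : ε * ((m:ℝ)+1) < |S D g (m+1) x| := by
      rw [abs_mul, abs_inv, abs_of_pos hnpos] at hn
      have h2 := mul_lt_mul_of_pos_left hn hnpos
      rw [← mul_assoc, mul_inv_cancel₀ (ne_of_gt hnpos), one_mul] at h2
      push_cast at h2 ⊢
      linarith
    rcases lt_abs.1 h1 with h | h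
    · exact Or.inl ⟨m, by push_cast; exact_mod_cast h⟩
    · exact Or.inr ⟨m, by rw [S_neg H]; push_cast; push_cast at h; linarith⟩
  calc μ _ ≤ μ (Gp ∪ Gm) := measure_mono hsub
    _ ≤ μ Gp + μ Gm := measure_union_le _ _
    _ ≤ ENNReal.ofReal ((∫ x, |g x| ∂μ) / ε) + ENNReal.ofReal ((∫ x, |(-g) x| ∂μ) / ε) := by
        exact add_le_add (maximal H hgm hgi hε) (maximal H hgm.neg hgi.neg hε)
    _ = ENNReal.ofReal (2 * (∫ x, |g x| ∂μ) / ε) := by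
        have : ∫ x, |(-g) x| ∂μ = ∫ x, |g x| ∂μ := by simp
        rw [this, ← ENNReal.ofReal_add (by positivity) (by positivity)]
        ring_nf
/-- a.e. convergence of `D^[n] v / n` to zero for square-integrable `v`. -/
lemma ae_tendsto_div [IsProbabilityMeasure μ] (H : Mk μ D) {v : X → ℝ}
    (hvm : Measurable v) (hv2 : Integrable (fun x => (v x)^2) μ) :
    ∀ᵐ x ∂μ, Tendsto (fun n : ℕ => (n : ℝ)⁻¹ * D^[n] v x) atTop (𝓝 0) := by
  set C : ℝ := ∫ x, (v x)^2 ∂μ with hC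
  have hC0 : 0 ≤ C := integral_nonneg (fun x => sq_nonneg _)
  set G : ℕ → X → ENNReal := fun n x => ENNReal.ofReal (((n:ℝ)⁻¹ * D^[n] v x)^2) with hG
  have hGm : ∀ n, Measurable (G n) := by
    intro n
    exact (((H.iter_meas hvm n).const_mul _).pow_const 2).ennreal_ofReal
  have hGint : ∀ n : ℕ, ∫⁻ x, G n x ∂μ ≤ ENNReal.ofReal (((n:ℝ)⁻¹)^2 * C) := by
    intro n
    have hsq := H.iter_sq_int hvm hv2 n
    have hint : Integrable (fun x => ((n:ℝ)⁻¹ * D^[n] v x)^2) μ := by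
      have : (fun x => ((n:ℝ)⁻¹ * D^[n] v x)^2)
          = fun x => ((n:ℝ)⁻¹)^2 * (D^[n] v x)^2 := by funext x; ring
      rw [this]
      exact hsq.1.const_mul _
    rw [hG]
    rw [← ofReal_integral_eq_lintegral_ofReal hint
      (Filter.Eventually.of_forall fun x => sq_nonneg _)]
    apply ENNReal.ofReal_le_ofReal
    have heq : ∫ x, ((n:ℝ)⁻¹ * D^[n] v x)^2 ∂μ = ((n:ℝ)⁻¹)^2 * ∫ x, (D^[n] v x)^2 ∂μ := by
      rw [← integral_const_mul]
      congr 1; funext x; ring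
    rw [heq]
    exact mul_le_mul_of_nonneg_left hsq.2 (by positivity)
  have hsummable : Summable (fun n : ℕ => ((n:ℝ)⁻¹)^2 * C) := by
    apply Summable.mul_right
    have := (Real.summable_one_div_nat_pow (p := 2)).2 (by norm_num)
    simpa [one_div] using this
  have htsum : ∑' n, ∫⁻ x, G n x ∂μ ≠ ⊤ := by
    apply ne_top_of_le_ne_top (b := ∑' n : ℕ, ENNReal.ofReal (((n:ℝ)⁻¹)^2 * C))
    · rw [← ENNReal.ofReal_tsum_of_nonneg (fun n => by positivity) hsummable]
      exact ENNReal.ofReal_ne_top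
    · exact ENNReal.tsum_le_tsum hGint
  have hae : ∀ᵐ x ∂μ, ∑' n, G n x < ⊤ := by
    apply ae_lt_top (Measurable.ennreal_tsum hGm)
    rw [lintegral_tsum (fun n => (hGm n).aemeasurable)]
    exact htsum
  filter_upwards [hae] with x hx
  have hterm : Tendsto (fun n => G n x) atTop (𝓝 0) :=
    ENNReal.tendsto_atTop_zero_of_tsum_ne_top hx.ne
  have hsq : Tendsto (fun n : ℕ => ((n:ℝ)⁻¹ * D^[n] v x)^2) atTop (𝓝 0) := by
    have : ∀ n : ℕ, ((n:ℝ)⁻¹ * D^[n] v x)^2 = (G n x).toReal := by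
      intro n
      rw [hG, ENNReal.toReal_ofReal (sq_nonneg _)]
    simp only [this]
    have := (ENNReal.tendsto_toReal (a := 0) (by simp)).comp hterm
    simpa [Function.comp_def] using this
  rw [tendsto_zero_iff_abs_tendsto_zero]
  have : (abs ∘ fun n : ℕ => (n:ℝ)⁻¹ * D^[n] v x)
      = fun n : ℕ => Real.sqrt (((n:ℝ)⁻¹ * D^[n] v x)^2) := by
    funext n; simp [Real.sqrt_sq_eq_abs]
  rw [this]
  have hcont := (Real.continuous_sqrt.tendsto 0).comp hsq
  simpa [Function.comp_def] using hcont

lemma ae_eq_of_ae_le_int {p q : X → ℝ} (hle : ∀ᵐ x ∂μ, p x ≤ q x)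
    (hp : Integrable p μ) (hq : Integrable q μ)
    (hi : ∫ x, p x ∂μ = ∫ x, q x ∂μ) : p =ᵐ[μ] q := by
  have h0 : ∫ x, (q x - p x) ∂μ = 0 := by
    rw [integral_sub hq hp]; linarith
  have := (integral_eq_zero_iff_of_nonneg_ae
    (f := fun x => q x - p x) ?_ (hq.sub hp)).1 h0
  · filter_upwards [this] with x hx
    have hx2 : q x - p x = 0 := hx
    linarith
  · filter_upwards [hle] with x hx
    simpa [sub_nonneg] using hx

/-- Fixed points of `D` in `L¹` are a.e. constant. -/
lemma fixed_const [IsProbabilityMeasure μ] (H : Mk μ D) {z : X → ℝ}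
    (hzm : Measurable z) (hzi : Integrable z μ) (hfix : D z =ᵐ[μ] z) :
    ∃ c : ℝ, z =ᵐ[μ] fun _ => c := by
  set t : ℕ → X → ℝ := fun m x => max (min (z x) m) (-(m:ℝ)) with ht
  have htm : ∀ m : ℕ, Measurable (t m) :=
    fun m => (hzm.min measurable_const).max measurable_const
  have hconst : ∀ m : ℕ, ∃ c : ℝ, t m =ᵐ[μ] fun _ => c := by
    intro m
    set m1 : X → ℝ := fun x => min (z x) m with hm1
    have hm1m : Measurable m1 := hzm.min measurable_const
    have hm1i : Integrable m1 μ := by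
      refine (hzi.abs.add (integrable_const (m:ℝ))).mono' hm1m.aestronglyMeasurable ?_
      filter_upwards with x
      rw [Real.norm_eq_abs]
      refine (abs_min_le_max_abs_abs).trans ?_
      simp only [Pi.add_apply]
      exact max_le (by simp [abs_nonneg, le_add_of_nonneg_right]) (by
        simp [abs_nonneg, le_add_of_nonneg_left, Nat.abs_cast])
    have hfix1 : D m1 =ᵐ[μ] m1 := by
      apply (ae_eq_of_ae_le_int ?_ (H.hpreserve m1 hm1i).1 hm1i
        (H.hpreserve m1 hm1i).2)
      filter_upwards [hfix] with x hx
      have h1 : D m1 x ≤ D z x := H.mono (fun y => min_le_left _ _) x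
      have h2 : D m1 x ≤ (m:ℝ) := by
        have := H.mono (f := m1) (g := fun _ => (m:ℝ)) (fun y => min_le_right _ _) x
        rwa [H.const] at this
      rw [hx] at h1
      exact le_min h1 h2
    have hti : Integrable (t m) μ := by
      refine (hm1i.abs.add (integrable_const (m:ℝ))).mono' (htm m).aestronglyMeasurable ?_
      filter_upwards with x
      rw [Real.norm_eq_abs]
      refine (abs_max_le_max_abs_abs).trans ?_
      simp only [Pi.add_apply, abs_neg, Nat.abs_cast]
      exact max_le (le_add_of_nonneg_right (by positivity))
        (le_add_of_nonneg_left (abs_nonneg _))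
    have hfix2 : D (t m) =ᵐ[μ] t m := by
      apply (ae_eq_of_ae_le_int ?_ ?_ (H.hpreserve _ hti).1
        (H.hpreserve _ hti).2.symm).symm
      · filter_upwards [hfix1] with x hx
        have h1 : D m1 x ≤ D (t m) x := H.mono (fun y => le_max_left _ _) x
        have h2 : -(m:ℝ) ≤ D (t m) x := by
          have := H.mono (f := fun _ => -(m:ℝ)) (g := t m) (fun y => le_max_right _ _) x
          rwa [H.const] at this
        rw [hx] at h1
        exact max_le h1 h2
      · exact hti
    refine H.hergodic (t m) (htm m) ⟨m, fun x => ?_⟩ hfix2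
    rw [abs_le]
    constructor
    · exact le_max_right _ _
    · exact max_le ((min_le_right _ _)) (by simp)
  choose c hc using hconst
  have hall : ∀ᵐ x ∂μ, ∀ m : ℕ, t m x = c m := ae_all_iff.2 fun m => hc m
  have hlim : ∀ x, Tendsto (fun m : ℕ => t m x) atTop (𝓝 (z x)) := by
    intro x
    apply Tendsto.congr' (f₁ := fun _ => z x) ?_ tendsto_const_nhds
    filter_upwards [Filter.eventually_ge_atTop ⌈|z x|⌉₊] with m hm
    have hmz : |z x| ≤ (m:ℝ) := (Nat.le_ceil _).trans (by exact_mod_cast hm)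
    obtain ⟨h1, h2⟩ := abs_le.1 hmz
    show z x = max (min (z x) m) (-(m:ℝ))
    rw [min_eq_left h2, max_eq_left h1]
  have hne : (ae μ).NeBot := ae_neBot.2 (IsProbabilityMeasure.ne_zero μ)
  obtain ⟨x₀, hx₀⟩ := hall.exists
  refine ⟨z x₀, ?_⟩
  filter_upwards [hall] with x hx
  have h1 : Tendsto (fun m : ℕ => c m) atTop (𝓝 (z x)) := by
    have := hlim x
    simpa only [hx] using this
  have h2 : Tendsto (fun m : ℕ => c m) atTop (𝓝 (z x₀)) := by
    have := hlim x₀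
    simpa only [hx₀] using this
  exact tendsto_nhds_unique h1 h2
section Hilbert

variable [IsProbabilityMeasure μ]

/-- `v` is a good test function: measurable, integrable with integrable square. -/
def Good (μ : Measure X) (v : X → ℝ) : Prop :=
  Measurable v ∧ Integrable v μ ∧ Integrable (fun x => (v x)^2) μ

lemma Good.memLp2 {v : X → ℝ} (hv : Good μ v) : MemLp v 2 μ :=
  (memLp_two_iff_integrable_sq hv.1.aestronglyMeasurable).2 hv.2.2

lemma Good.applyD (H : Mk μ D) {v : X → ℝ} (hv : Good μ v) : Good μ (D v) := by
  obtain ⟨hm, hi, hsq⟩ := hv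
  refine ⟨H.hmeas v hm, (H.hpreserve v hi).1, ?_⟩
  have hb := H.sq_le v
  have hDint := (H.hpreserve _ hsq).1
  refine hDint.mono' ((H.hmeas v hm).pow_const 2).aestronglyMeasurable ?_
  filter_upwards with x
  rw [Real.norm_eq_abs, abs_of_nonneg (sq_nonneg _)]
  exact hb x

lemma Good.sub {v w : X → ℝ} (hv : Good μ v) (hw : Good μ w) :
    Good μ (fun x => v x - w x) := by
  refine ⟨hv.1.sub hw.1, hv.2.1.sub hw.2.1, ?_⟩
  refine ((hv.2.2.add hw.2.2).const_mul 2).mono'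
    ((hv.1.sub hw.1).pow_const 2).aestronglyMeasurable ?_
  filter_upwards with x
  rw [Real.norm_eq_abs, abs_of_nonneg (sq_nonneg _)]
  simp only [Pi.add_apply]
  nlinarith [sq_nonneg (v x + w x)]

lemma Good.cob (H : Mk μ D) {v : X → ℝ} (hv : Good μ v) :
    Good μ (fun x => v x - D v x) := hv.sub (hv.applyD H)

/-- The submodule of (classes of) coboundaries in L². -/
noncomputable def cobSub (μ : Measure X) [IsProbabilityMeasure μ] (D : (X → ℝ) → (X → ℝ)) (H : Mk μ D) :
    Submodule ℝ (Lp ℝ 2 μ) where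
  carrier := {w | ∃ v : X → ℝ, Good μ v ∧ (w : X → ℝ) =ᵐ[μ] fun x => v x - D v x}
  zero_mem' := by
    refine ⟨0, ⟨measurable_const, integrable_zero _ _ _, by simpa using (integrable_zero X ℝ μ)⟩, ?_⟩
    filter_upwards [Lp.coeFn_zero ℝ 2 μ] with x hx
    simp only [hx]
    have : D (0 : X → ℝ) = 0 := H.zero
    simp [Pi.zero_apply, this]
  add_mem' := by
    rintro a b ⟨v, hv, hae⟩ ⟨w, hw, hbe⟩
    refine ⟨fun x => v x + w x, ⟨hv.1.add hw.1, hv.2.1.add hw.2.1, ?_⟩, ?_⟩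
    · refine ((hv.2.2.add hw.2.2).const_mul 2).mono'
        ((hv.1.add hw.1).pow_const 2).aestronglyMeasurable ?_
      filter_upwards with x
      rw [Real.norm_eq_abs, abs_of_nonneg (sq_nonneg _)]
      simp only [Pi.add_apply]
      nlinarith [sq_nonneg (v x - w x)]
    · filter_upwards [hae, hbe, Lp.coeFn_add a b] with x ha hb hab
      have hD : D (fun y => v y + w y) x = D v x + D w x := H.addfun v w x
      simp only [hab, Pi.add_apply, ha, hb, hD]
      ring
  smul_mem' := by
    rintro c a ⟨v, hv, hae⟩
    refine ⟨fun x => c * v x, ⟨hv.1.const_mul c, hv.2.1.const_mul c, ?_⟩, ?_⟩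
    · have : (fun x => (c * v x)^2) = fun x => c^2 * (v x)^2 := by funext x; ring
      rw [this]
      exact hv.2.2.const_mul _
    · filter_upwards [hae, Lp.coeFn_smul c a] with x ha hc
      have hD : D (fun y => c * v y) x = c * D v x := H.smulfun c v x
      simp only [hc, Pi.smul_apply, smul_eq_mul, ha, hD]
      ring

/-- Density of coboundaries: any bounded measurable `u` with `∫ u = 0` can be
approximated in `L²` by coboundaries. -/
lemma coboundary_dense (H : Mk μ D) {u : X → ℝ}
    (hum : Measurable u) {cu : ℝ} (hub : ∀ x, |u x| ≤ cu) (hu0 : ∫ x, u x ∂μ = 0)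
    {δ : ℝ} (hδ : 0 < δ) :
    ∃ v : X → ℝ, Good μ v ∧ ∫ x, (u x - (v x - D v x))^2 ∂μ < δ^2 := by
  have hugood : Good μ u := by
    refine ⟨hum, ?_, ?_⟩
    · refine (integrable_const cu).mono' hum.aestronglyMeasurable ?_
      filter_upwards with x; exact hub x
    · refine (integrable_const (cu^2)).mono' (hum.pow_const 2).aestronglyMeasurable ?_
      filter_upwards with x
      rw [Real.norm_eq_abs, abs_of_nonneg (sq_nonneg _)]
      nlinarith [hub x, abs_nonneg (u x), neg_abs_le (u x), le_abs_self (u x)]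
  set uL : Lp ℝ 2 μ := hugood.memLp2.toLp u with huL
  -- uL is in the double orthogonal complement of cobSub
  have hmem : uL ∈ (cobSub μ D H)ᗮᗮ := by
    rw [Submodule.mem_orthogonal]
    intro z hz
    -- z is orthogonal to all coboundaries; take measurable representative
    set zc : X → ℝ := ((Lp.memLp z).aestronglyMeasurable.mk _) with hzc
    have hzcm : Measurable zc := (Lp.memLp z).aestronglyMeasurable.stronglyMeasurable_mk.measurable
    have hzae : (z : X → ℝ) =ᵐ[μ] zc := (Lp.memLp z).aestronglyMeasurable.ae_eq_mk
    have hzc2 : MemLp zc 2 μ := (Lp.memLp z).ae_eq hzae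
    have hzcsq : Integrable (fun x => (zc x)^2) μ :=
      (memLp_two_iff_integrable_sq hzcm.aestronglyMeasurable).1 hzc2
    have hzci : Integrable zc μ := (hzc2.mono_exponent (by norm_num)).integrable le_rfl
    have hzgood : Good μ zc := ⟨hzcm, hzci, hzcsq⟩
    -- orthogonality applied to the coboundary of zc
    have hw : ((hzgood.cob H).memLp2.toLp (fun x => zc x - D zc x)) ∈ cobSub μ D H :=
      ⟨zc, hzgood, (hzgood.cob H).memLp2.coeFn_toLp⟩
    have hinner := (Submodule.mem_orthogonal _ _).1 hz _ hw
    rw [L2.inner_def] at hinner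
    have hinner2 : ∫ x, (zc x - D zc x) * zc x ∂μ = 0 := by
      rw [← hinner]
      apply integral_congr_ae
      filter_upwards [(hzgood.cob H).memLp2.coeFn_toLp, hzae] with x h1 h2
      simp [h1, h2, RCLike.inner_apply, mul_comm]
    -- D zc = zc a.e.
    have hDsq : Integrable (fun x => (D zc x)^2) μ := ((hzgood.applyD H)).2.2
    have hDz : Integrable (D zc) μ := (hzgood.applyD H).2.1
    have hprod : Integrable (fun x => D zc x * zc x) μ := by
      refine ((hDsq.add hzcsq).const_mul 2⁻¹).mono'
        ((H.hmeas _ hzcm).mul hzcm).aestronglyMeasurable ?_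
      filter_upwards with x
      rw [Real.norm_eq_abs]
      simp only [Pi.add_apply]
      rcases abs_cases (D zc x * zc x) with ⟨h, _⟩ | ⟨h, _⟩ <;>
        nlinarith [sq_nonneg (D zc x - zc x), sq_nonneg (D zc x + zc x)]
    have hsqle : ∫ x, (D zc x)^2 ∂μ ≤ ∫ x, (zc x)^2 ∂μ := by
      have := H.iter_sq_int hzcm hzcsq 1
      simpa using this.2
    have hzero : ∫ x, (D zc x - zc x)^2 ∂μ ≤ 0 := by
      have hexp : ∀ x, (D zc x - zc x)^2
          = (D zc x)^2 - 2 * (D zc x * zc x) + (zc x)^2 := by intro x; ring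
      have hint1 : Integrable (fun x => (D zc x)^2 - 2 * (D zc x * zc x)) μ := by
        exact hDsq.sub (hprod.const_mul 2)
      have hsplit : ∫ x, (D zc x - zc x)^2 ∂μ
          = ∫ x, (D zc x)^2 ∂μ - 2 * ∫ x, D zc x * zc x ∂μ + ∫ x, (zc x)^2 ∂μ := by
        simp only [hexp]
        rw [integral_add hint1 hzcsq,
          integral_sub hDsq (hprod.const_mul 2), integral_const_mul]
      have hip : ∫ x, D zc x * zc x ∂μ = ∫ x, (zc x)^2 ∂μ := by
        have h2 : ∫ x, ((zc x - D zc x) * zc x) ∂μ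
            = ∫ x, (zc x)^2 ∂μ - ∫ x, D zc x * zc x ∂μ := by
          have : ∀ x, (zc x - D zc x) * zc x = (zc x)^2 - D zc x * zc x := by intro x; ring
          simp only [this]
          exact integral_sub hzcsq hprod
        rw [hinner2] at h2
        linarith
      rw [hsplit, hip]
      ring_nf
      linarith
    have hfix : D zc =ᵐ[μ] zc := by
      have hnneg : 0 ≤ᵐ[μ] fun x => (D zc x - zc x)^2 :=
        Filter.Eventually.of_forall fun x => sq_nonneg _
      have hint : Integrable (fun x => (D zc x - zc x)^2) μ := by
        have : ∀ x, (D zc x - zc x)^2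
            = (D zc x)^2 - 2 * (D zc x * zc x) + (zc x)^2 := by intro x; ring
        simp only [this]
        exact ((hDsq.sub (hprod.const_mul 2)).add hzcsq : _)
      have hz0 : ∫ x, (D zc x - zc x)^2 ∂μ = 0 :=
        le_antisymm hzero (integral_nonneg fun x => sq_nonneg _)
      have := (integral_eq_zero_iff_of_nonneg_ae hnneg hint).1 hz0
      filter_upwards [this] with x hx
      have hx2 : (D zc x - zc x)^2 = 0 := hx
      have := pow_eq_zero_iff (n := 2) (by norm_num) |>.1 hx2
      linarith
    -- zc is a.e. constant, and u has zero integral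
    obtain ⟨c, hc⟩ := fixed_const H hzcm hzci hfix
    rw [L2.inner_def]
    have heval : ∫ x, (inner ℝ ((z : X → ℝ) x) ((uL : X → ℝ) x) : ℝ) ∂μ = ∫ x, c * u x ∂μ := by
      apply integral_congr_ae
      filter_upwards [hugood.memLp2.coeFn_toLp, hzae, hc] with x h1 h2 h3
      simp only [RCLike.inner_apply, RCLike.conj_to_real]
      rw [h1, h2, h3, mul_comm]
    rw [heval, integral_const_mul, hu0, mul_zero]
  -- extract an approximating coboundary
  rw [Submodule.orthogonal_orthogonal_eq_closure] at hmem
  have hclos : uL ∈ closure (cobSub μ D H : Set (Lp ℝ 2 μ)) := by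
    rw [← Submodule.topologicalClosure_coe]
    exact hmem
  obtain ⟨w, hwmem, hwdist⟩ := Metric.mem_closure_iff.1 hclos δ hδ
  obtain ⟨v, hvgood, hvae⟩ := hwmem
  refine ⟨v, hvgood, ?_⟩
  have hnorm : ∫ x, (u x - (v x - D v x))^2 ∂μ = ‖uL - w‖^2 := by
    rw [← real_inner_self_eq_norm_sq, L2.inner_def]
    apply integral_congr_ae
    filter_upwards [Lp.coeFn_sub uL w, hugood.memLp2.coeFn_toLp, hvae] with x h1 h2 h3
    rw [← huL] at h2
    simp only [RCLike.inner_apply, RCLike.conj_to_real, h1, Pi.sub_apply, h2, h3]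
    ring
  rw [hnorm]
  have : ‖uL - w‖ < δ := by rwa [← dist_eq_norm]
  nlinarith [norm_nonneg (uL - w)]

end Hilbert
lemma Mk.iter_neg (H : Mk μ D) (g : X → ℝ) (k : ℕ) : D^[k] (-g) = - D^[k] g := by
  induction k with
  | zero => rfl
  | succ m ih => rw [Function.iterate_succ_apply', Function.iterate_succ_apply', ih, H.neg]

lemma S_add (H : Mk μ D) (p q : X → ℝ) (n : ℕ) (x : X) :
    S D (fun y => p y + q y) n x = S D p n x + S D q n x := by
  have h : (fun y => p y + q y) = p + q := rfl
  simp only [S, h, H.iter_add]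
  simp [Finset.sum_add_distrib]

lemma S_telescope (H : Mk μ D) (v : X → ℝ) (n : ℕ) (x : X) :
    S D (fun y => v y - D v y) n x = v x - D^[n] v x := by
  induction n with
  | zero => simp [S]
  | succ m ih =>
      have hstep : S D (fun y => v y - D v y) (m+1) x
          = S D (fun y => v y - D v y) m x + D^[m] (fun y => v y - D v y) x := by
        simp [S, Finset.sum_range_succ]
      have hsub : (fun y => v y - D v y) = v + -(D v) := by
        funext y; simp [sub_eq_add_neg]
      have hit : D^[m] (fun y => v y - D v y) x = D^[m] v x - D^[m+1] v x := by
        rw [hsub, H.iter_add, H.iter_neg]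
        simp [Function.iterate_succ_apply, sub_eq_add_neg]
      rw [hstep, ih, hit, Function.iterate_succ_apply]
      ring

/-- Truncation approximation in L¹. -/
lemma trunc_approx {f : X → ℝ} [IsProbabilityMeasure μ] (hfm : Measurable f)
    (hfi : Integrable f μ) {δ : ℝ} (hδ : 0 < δ) :
    ∃ b : X → ℝ, Measurable b ∧ (∃ c : ℝ, ∀ x, |b x| ≤ c) ∧ Integrable b μ ∧
      ∫ x, |f x - b x| ∂μ < δ := by
  set b : ℕ → X → ℝ := fun m x => max (min (f x) m) (-(m:ℝ)) with hb
  have hbm : ∀ m : ℕ, Measurable (b m) :=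
    fun m => (hfm.min measurable_const).max measurable_const
  have hble : ∀ m x, |b m x| ≤ |f x| := by
    intro m x
    rw [abs_le]
    constructor
    · refine le_trans ?_ (le_max_left _ _)
      exact le_min (neg_abs_le (f x)) (le_trans (neg_nonpos_of_nonneg (abs_nonneg _)) (by positivity))
    · exact max_le ((min_le_left _ _).trans (le_abs_self _))
        (le_trans (by simp) (abs_nonneg (f x)))
  have hbi : ∀ m, Integrable (b m) μ := by
    intro m
    refine hfi.abs.mono' (hbm m).aestronglyMeasurable ?_
    filter_upwards with x
    rw [Real.norm_eq_abs]
    exact hble m x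
  have hlim : Tendsto (fun m : ℕ => ∫ x, |f x - b m x| ∂μ) atTop (𝓝 0) := by
    have h0 : (0:ℝ) = ∫ x, (0:ℝ) ∂μ := by simp
    rw [h0]
    apply tendsto_integral_of_dominated_convergence (fun x => 2 * |f x|)
    · exact fun m => ((hfm.sub (hbm m)).abs).aestronglyMeasurable
    · exact hfi.abs.const_mul 2
    · intro m
      filter_upwards with x
      rw [Real.norm_eq_abs, abs_abs]
      calc |f x - b m x| ≤ |f x| + |b m x| := abs_sub _ _
        _ ≤ 2 * |f x| := by linarith [hble m x]
    · filter_upwards with x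
      apply Tendsto.congr' (f₁ := fun _ => (0:ℝ)) ?_ tendsto_const_nhds
      filter_upwards [Filter.eventually_ge_atTop ⌈|f x|⌉₊] with m hm
      have hmz : |f x| ≤ (m:ℝ) := (Nat.le_ceil _).trans (by exact_mod_cast hm)
      obtain ⟨h1, h2⟩ := abs_le.1 hmz
      have : b m x = f x := by
        show max (min (f x) m) (-(m:ℝ)) = f x
        rw [min_eq_left h2, max_eq_left h1]
      rw [this]
      simp
  have := (hlim.eventually (eventually_lt_nhds hδ)).exists
  obtain ⟨m, hm⟩ := this
  exact ⟨b m, hbm m, ⟨m, fun x => by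
    rw [abs_le]
    exact ⟨le_max_right _ _, max_le ((min_le_right _ _)) (by simp)⟩⟩, hbi m, hm⟩
lemma bad_null [IsProbabilityMeasure μ] (H : Mk μ D) {f : X → ℝ}
    (hfm : Measurable f) (hfi : Integrable f μ) (hf0 : ∫ x, f x ∂μ = 0)
    {ε : ℝ} (hε : 0 < ε) :
    μ {x | ∃ᶠ n : ℕ in atTop, ε < |(n : ℝ)⁻¹ * S D f n x|} = 0 := by
  have key : ∀ δ : ℝ, 0 < δ → δ ≤ ε/4 →
      μ {x | ∃ᶠ n : ℕ in atTop, ε < |(n : ℝ)⁻¹ * S D f n x|}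
        ≤ ENNReal.ofReal (16 * δ / ε) := by
    intro δ hδ hδε
    obtain ⟨b, hbm, ⟨cb, hcb⟩, hbi, hfb⟩ := trunc_approx hfm hfi hδ
    set c : ℝ := ∫ x, b x ∂μ with hc
    have hp1m : Measurable (fun y => f y - b y) := hfm.sub hbm
    have hp1i : Integrable (fun y => f y - b y) μ := hfi.sub hbi
    have hcbound : |c| < δ := by
      have h1 : c = ∫ x, (b x - f x) ∂μ := by
        rw [integral_sub hbi hfi, hf0, sub_zero]
      have h2 : |∫ x, (b x - f x) ∂μ| ≤ ∫ x, |b x - f x| ∂μ := by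
        simpa [Real.norm_eq_abs] using
          norm_integral_le_integral_norm (f := fun x => b x - f x) (μ := μ)
      have h3 : ∫ x, |b x - f x| ∂μ = ∫ x, |f x - b x| ∂μ := by
        apply integral_congr_ae
        filter_upwards with x
        rw [abs_sub_comm]
      rw [h1]
      calc |∫ x, (b x - f x) ∂μ| ≤ ∫ x, |b x - f x| ∂μ := h2
        _ = ∫ x, |f x - b x| ∂μ := h3
        _ < δ := hfb
    set u : X → ℝ := fun x => b x - c with hu
    have hum : Measurable u := hbm.sub measurable_const
    have hub : ∀ x, |u x| ≤ cb + |c| := fun x =>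
      (abs_sub _ _).trans (add_le_add (hcb x) le_rfl)
    have hui : Integrable u μ := hbi.sub (integrable_const c)
    have hu0 : ∫ x, u x ∂μ = 0 := by
      rw [hu]
      rw [integral_sub hbi (integrable_const c), integral_const]
      simp [hc]
    obtain ⟨v, hvgood, hv2⟩ := coboundary_dense H hum hub hu0 hδ
    set w : X → ℝ := fun x => u x - (v x - D v x) with hw
    have hwm : Measurable w := hum.sub (hvgood.1.sub (H.hmeas v hvgood.1))
    have hwi : Integrable w μ := hui.sub (hvgood.2.1.sub (H.hpreserve v hvgood.2.1).1)
    have hw2 : ∫ x, (w x)^2 ∂μ < δ^2 := hv2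
    have hugood : Good μ u := by
      refine ⟨hum, hui, ?_⟩
      refine (integrable_const ((cb + |c|)^2)).mono' (hum.pow_const 2).aestronglyMeasurable ?_
      filter_upwards with x
      rw [Real.norm_eq_abs, abs_of_nonneg (sq_nonneg _)]
      have h := hub x
      have h2 : (u x)^2 = |u x|^2 := (sq_abs _).symm
      nlinarith [abs_nonneg (u x)]
    have hwgood : Good μ w := hugood.sub (hvgood.cob H)
    have hw1 : ∫ x, |w x| ∂μ < δ := by
      have hpt : ∀ x, |w x| ≤ ((w x)^2 / δ + δ)/2 := by
        intro x
        have h1 : 2 * δ * |w x| ≤ (w x)^2 + δ^2 := by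
          nlinarith [sq_nonneg (|w x| - δ), sq_abs (w x)]
        have h2 : ((w x)^2 / δ + δ)/2 = ((w x)^2 + δ^2)/(2*δ) := by
          field_simp
        rw [h2, le_div_iff₀ (by positivity : (0:ℝ) < 2*δ)]
        nlinarith
      have hrhsint : Integrable (fun x => ((w x)^2 / δ + δ)/2) μ :=
        (((hwgood.2.2.div_const δ).add (integrable_const δ)).div_const 2)
      calc ∫ x, |w x| ∂μ ≤ ∫ x, ((w x)^2 / δ + δ)/2 ∂μ :=
            integral_mono hwi.abs hrhsint hpt
        _ = ((∫ x, (w x)^2 ∂μ) / δ + δ)/2 := by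
            rw [integral_div, integral_add (hwgood.2.2.div_const δ) (integrable_const δ),
              integral_div, integral_const]
            simp
        _ < (δ^2 / δ + δ)/2 := by
            have hlt : (∫ x, (w x)^2 ∂μ)/δ < δ^2/δ := div_lt_div_of_pos_right hw2 hδ
            linarith
        _ = δ := by field_simp; ring
    -- decomposition of the averages
    have hfe : f = (fun y => f y - b y) + ((fun _ : X => c)
        + ((fun y => v y - D v y) + w)) := by
      funext y
      simp only [Pi.add_apply, hw, hu]
      ring
    have hdecomp : ∀ (n : ℕ) (x : X), S D f n x
        = S D (fun y => f y - b y) n x + (n:ℝ)*c + (v x - D^[n] v x) + S D w n x := by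
      intro n x
      have hk : ∀ k : ℕ, D^[k] f = D^[k] (fun y => f y - b y)
          + (D^[k] (fun _ : X => c) + (D^[k] (fun y => v y - D v y) + D^[k] w)) := by
        intro k
        conv_lhs => rw [hfe]
        rw [H.iter_add, H.iter_add, H.iter_add]
      have hstep : S D f n x = ∑ k ∈ Finset.range n,
          (D^[k] (fun y => f y - b y) x + (c + (D^[k] (fun y => v y - D v y) x + D^[k] w x))) := by
        simp only [S]
        apply Finset.sum_congr rfl
        intro k _
        rw [hk k]
        simp [Pi.add_apply, H.iter_const]
      rw [hstep]
      simp only [Finset.sum_add_distrib, Finset.sum_const, Finset.card_range, nsmul_eq_mul]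
      have ht := S_telescope H v n x
      simp only [S] at ht
      rw [ht]
      simp only [S]
      ring
    -- bad set inclusion
    have hsub : {x | ∃ᶠ n : ℕ in atTop, ε < |(n : ℝ)⁻¹ * S D f n x|}
        ⊆ {x | ∃ᶠ n : ℕ in atTop, ε/4 < |(n : ℝ)⁻¹ * S D (fun y => f y - b y) n x|}
          ∪ ({x | ∃ᶠ n : ℕ in atTop, ε/4 < |(n : ℝ)⁻¹ * (v x - D^[n] v x)|}
          ∪ {x | ∃ᶠ n : ℕ in atTop, ε/4 < |(n : ℝ)⁻¹ * S D w n x|}) := by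
      intro x hx
      by_contra hnot
      simp only [Set.mem_union, Set.mem_setOf_eq, not_or] at hnot
      obtain ⟨h1, h3, h4⟩ := hnot
      have e1 := Filter.not_frequently.mp h1
      have e3 := Filter.not_frequently.mp h3
      have e4 := Filter.not_frequently.mp h4
      have hx' : ∃ᶠ n : ℕ in atTop, ε < |(n : ℝ)⁻¹ * S D f n x| := hx
      have hcomb := (hx'.and_eventually (e1.and (e3.and (e4.and
        (Filter.eventually_ge_atTop 1))))).exists
      obtain ⟨n, hn, hn1, hn3, hn4, hnge⟩ := hcomb
      push_neg at hn1 hn3 hn4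
      have hnpos : (0:ℝ) < (n:ℝ) := by exact_mod_cast hnge
      have hninv : (n:ℝ)⁻¹ * ((n:ℝ) * c) = c := by
        field_simp
      have heq : (n:ℝ)⁻¹ * S D f n x
          = (n:ℝ)⁻¹ * S D (fun y => f y - b y) n x + c
            + (n:ℝ)⁻¹ * (v x - D^[n] v x) + (n:ℝ)⁻¹ * S D w n x := by
        rw [hdecomp n x]
        field_simp
      have habs : |(n:ℝ)⁻¹ * S D f n x|
          ≤ |(n:ℝ)⁻¹ * S D (fun y => f y - b y) n x| + |c|
            + |(n:ℝ)⁻¹ * (v x - D^[n] v x)| + |(n:ℝ)⁻¹ * S D w n x| := by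
        rw [heq]
        calc |(n:ℝ)⁻¹ * S D (fun y => f y - b y) n x + c
            + (n:ℝ)⁻¹ * (v x - D^[n] v x) + (n:ℝ)⁻¹ * S D w n x|
            ≤ |(n:ℝ)⁻¹ * S D (fun y => f y - b y) n x + c
              + (n:ℝ)⁻¹ * (v x - D^[n] v x)| + |(n:ℝ)⁻¹ * S D w n x| := abs_add_le _ _
          _ ≤ |(n:ℝ)⁻¹ * S D (fun y => f y - b y) n x + c|
              + |(n:ℝ)⁻¹ * (v x - D^[n] v x)| + |(n:ℝ)⁻¹ * S D w n x| := by
              have := abs_add_le ((n:ℝ)⁻¹ * S D (fun y => f y - b y) n x + c)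
                ((n:ℝ)⁻¹ * (v x - D^[n] v x))
              linarith
          _ ≤ _ := by
              have := abs_add_le ((n:ℝ)⁻¹ * S D (fun y => f y - b y) n x) c
              linarith
      linarith
    -- measure bounds
    have hB1 : μ {x | ∃ᶠ n : ℕ in atTop, ε/4 < |(n : ℝ)⁻¹ * S D (fun y => f y - b y) n x|}
        ≤ ENNReal.ofReal (8 * δ / ε) := by
      refine le_trans (maximal_freq H hp1m hp1i (by positivity)) ?_
      apply ENNReal.ofReal_le_ofReal
      rw [div_le_div_iff₀ (by positivity) hε]
      have : ∫ x, |f x - b x| ∂μ < δ := hfb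
      nlinarith [this]
    have hB4 : μ {x | ∃ᶠ n : ℕ in atTop, ε/4 < |(n : ℝ)⁻¹ * S D w n x|}
        ≤ ENNReal.ofReal (8 * δ / ε) := by
      refine le_trans (maximal_freq H hwm hwi (by positivity)) ?_
      apply ENNReal.ofReal_le_ofReal
      rw [div_le_div_iff₀ (by positivity) hε]
      nlinarith [hw1]
    have hB3 : μ {x | ∃ᶠ n : ℕ in atTop, ε/4 < |(n : ℝ)⁻¹ * (v x - D^[n] v x)|} = 0 := by
      have hae := ae_tendsto_div H hvgood.1 hvgood.2.2
      have hsub3 : {x | ∃ᶠ n : ℕ in atTop, ε/4 < |(n : ℝ)⁻¹ * (v x - D^[n] v x)|}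
          ⊆ {x | ¬ Tendsto (fun n : ℕ => (n : ℝ)⁻¹ * D^[n] v x) atTop (𝓝 0)} := by
        intro x hx ht
        have hv0 : Tendsto (fun n : ℕ => (n:ℝ)⁻¹ * v x) atTop (𝓝 0) := by
          have h := tendsto_inv_atTop_nhds_zero_nat.mul_const (v x)
          simpa using h
        have hcomb : Tendsto (fun n : ℕ => (n:ℝ)⁻¹ * (v x - D^[n] v x)) atTop (𝓝 0) := by
          have := hv0.sub ht
          have heq : (fun n : ℕ => (n:ℝ)⁻¹ * (v x - D^[n] v x))
              = fun n : ℕ => (n:ℝ)⁻¹ * v x - (n:ℝ)⁻¹ * D^[n] v x := by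
            funext n; ring
          rw [heq]
          simpa using this
        have hev : ∀ᶠ n : ℕ in atTop, |(n:ℝ)⁻¹ * (v x - D^[n] v x)| < ε/4 := by
          have := hcomb.eventually (eventually_abs_sub_lt 0 (by positivity : (0:ℝ) < ε/4))
          simpa using this
        exact (hx.and_eventually hev).exists.elim (fun n hn => absurd hn.1 (not_lt.2 hn.2.le))
      exact measure_mono_null hsub3 (by simpa [ae_iff] using hae)
    calc μ {x | ∃ᶠ n : ℕ in atTop, ε < |(n : ℝ)⁻¹ * S D f n x|}
        ≤ μ ({x | ∃ᶠ n : ℕ in atTop, ε/4 < |(n : ℝ)⁻¹ * S D (fun y => f y - b y) n x|}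
          ∪ ({x | ∃ᶠ n : ℕ in atTop, ε/4 < |(n : ℝ)⁻¹ * (v x - D^[n] v x)|}
          ∪ {x | ∃ᶠ n : ℕ in atTop, ε/4 < |(n : ℝ)⁻¹ * S D w n x|})) := measure_mono hsub
      _ ≤ ENNReal.ofReal (8 * δ / ε) + (0 + ENNReal.ofReal (8 * δ / ε)) := by
          refine le_trans (measure_union_le _ _) (add_le_add hB1 ?_)
          refine le_trans (measure_union_le _ _) (add_le_add hB3.le hB4)
      _ = ENNReal.ofReal (16 * δ / ε) := by
          rw [zero_add, ← ENNReal.ofReal_add (by positivity) (by positivity)]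
          congr 1
          ring
  -- conclude μ Bad = 0 by letting δ → 0
  have hseq : ∀ k : ℕ, μ {x | ∃ᶠ n : ℕ in atTop, ε < |(n : ℝ)⁻¹ * S D f n x|}
      ≤ ENNReal.ofReal (16 * ((ε/4)/((k:ℝ)+1)) / ε) := by
    intro k
    refine key _ (by positivity) ?_
    rw [div_le_iff₀ (by positivity : (0:ℝ) < (k:ℝ)+1)]
    nlinarith [(Nat.cast_nonneg k : (0:ℝ) ≤ (k:ℝ)), hε]
  have htend : Tendsto (fun k : ℕ => ENNReal.ofReal (16 * ((ε/4)/((k:ℝ)+1)) / ε))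
      atTop (𝓝 0) := by
    have hreal : Tendsto (fun k : ℕ => 16 * ((ε/4)/((k:ℝ)+1)) / ε) atTop (𝓝 0) := by
      have heq : (fun k : ℕ => 16 * ((ε/4)/((k:ℝ)+1)) / ε)
          = fun k : ℕ => 4 * (((k:ℝ)+1)⁻¹) := by
        funext k
        field_simp
        ring
      rw [heq]
      have h2 : Tendsto (fun k : ℕ => ((k:ℝ)+1)⁻¹) atTop (𝓝 0) := by
        have := tendsto_one_div_add_atTop_nhds_zero_nat (𝕜 := ℝ)
        simpa [one_div] using this
      simpa using h2.const_mul 4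
    have := ENNReal.tendsto_ofReal hreal
    simpa using this
  have hle := ge_of_tendsto htend (Filter.Eventually.of_forall hseq)
  simpa using hle

lemma main_zero [IsProbabilityMeasure μ] (H : Mk μ D) {f : X → ℝ}
    (hfm : Measurable f) (hfi : Integrable f μ) (hf0 : ∫ x, f x ∂μ = 0) :
    ∀ᵐ x ∂μ, Tendsto (fun n : ℕ => (n : ℝ)⁻¹ * S D f n x) atTop (𝓝 0) := by
  have hk : ∀ k : ℕ, μ {x | ∃ᶠ n : ℕ in atTop, 1/((k:ℝ)+1) < |(n : ℝ)⁻¹ * S D f n x|} = 0 :=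
    fun k => bad_null H hfm hfi hf0 (by positivity)
  have hae : ∀ᵐ x ∂μ, ∀ k : ℕ,
      ¬ (∃ᶠ n : ℕ in atTop, 1/((k:ℝ)+1) < |(n : ℝ)⁻¹ * S D f n x|) := by
    rw [ae_all_iff]
    intro k
    exact measure_eq_zero_iff_ae_notMem.mp (hk k)
  filter_upwards [hae] with x hx
  rw [NormedAddCommGroup.tendsto_nhds_zero]
  intro ε hε
  obtain ⟨k, hk'⟩ := exists_nat_one_div_lt hε
  have hev := Filter.not_frequently.mp (hx k)
  filter_upwards [hev] with n hn
  rw [Real.norm_eq_abs]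
  push_neg at hn
  calc |(n : ℝ)⁻¹ * S D f n x| ≤ 1/((k:ℝ)+1) := hn
    _ < ε := by exact_mod_cast hk'
end Stmt14

theorem stmt14 {X : Type*} [MeasurableSpace X] (μ : Measure X) [IsProbabilityMeasure μ]
    (D : (X → ℝ) → (X → ℝ))
    (hadd : ∀ f g : X → ℝ, D (f + g) = D f + D g)
    (hsmul : ∀ (c : ℝ) (f : X → ℝ), D (c • f) = c • D f)
    (hpos : ∀ f : X → ℝ, (∀ x, 0 ≤ f x) → ∀ x, 0 ≤ D f x)
    (hcontr : ∀ (f : X → ℝ) (c : ℝ), (∀ x, |f x| ≤ c) → ∀ x, |D f x| ≤ c)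
    (hmeas : ∀ f : X → ℝ, Measurable f → Measurable (D f))
    (hcongr : ∀ f g : X → ℝ, f =ᵐ[μ] g → D f =ᵐ[μ] D g)
    (hone : D (fun _ => 1) = fun _ => 1)
    (hpreserve : ∀ f : X → ℝ, Integrable f μ →
      Integrable (D f) μ ∧ ∫ x, D f x ∂μ = ∫ x, f x ∂μ)
    (hergodic : ∀ f : X → ℝ, Measurable f → (∃ c : ℝ, ∀ x, |f x| ≤ c) →
      D f =ᵐ[μ] f → ∃ c : ℝ, f =ᵐ[μ] fun _ => c) :
    ∀ f : X → ℝ, Integrable f μ →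
      ∀ᵐ x ∂μ, Tendsto (fun n : ℕ => (n : ℝ)⁻¹ * ∑ k ∈ Finset.range n, D^[k] f x)
        atTop (𝓝 (∫ x, f x ∂μ)) := by
  intro f hfi
  have H : Stmt14.Mk μ D := ⟨hadd, hsmul, hpos, hmeas, hcongr, hone, hpreserve, hergodic⟩
  set g : X → ℝ := hfi.1.mk f with hg
  have hgm : Measurable g := hfi.1.stronglyMeasurable_mk.measurable
  have hfg : f =ᵐ[μ] g := hfi.1.ae_eq_mk
  have hgi : Integrable g μ := hfi.congr hfg
  have hint : ∫ x, f x ∂μ = ∫ x, g x ∂μ := integral_congr_ae hfg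
  set m : ℝ := ∫ x, g x ∂μ with hm
  set g0 : X → ℝ := fun y => g y - m with hg0
  have hg0m : Measurable g0 := hgm.sub measurable_const
  have hg0i : Integrable g0 μ := hgi.sub (integrable_const m)
  have hg00 : ∫ x, g0 x ∂μ = 0 := by
    rw [hg0]
    rw [integral_sub hgi (integrable_const m), integral_const]
    simp [hm]
  have hmain := Stmt14.main_zero H hg0m hg0i hg00
  have hiter : ∀ᵐ x ∂μ, ∀ k : ℕ, D^[k] f x = D^[k] g x :=
    ae_all_iff.2 (fun k => H.iter_congr hfg k)
  filter_upwards [hmain, hiter] with x hx hxe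
  rw [hint]
  have hfun : (fun n : ℕ => (n:ℝ)⁻¹ * ∑ k ∈ Finset.range n, D^[k] f x)
      = fun n : ℕ => (n:ℝ)⁻¹ * Stmt14.S D g n x := by
    funext n
    congr 1
    exact Finset.sum_congr rfl fun k _ => hxe k
  rw [hfun]
  have h1 : Tendsto (fun n : ℕ => (n:ℝ)⁻¹ * Stmt14.S D g0 n x + m) atTop (𝓝 m) := by
    have := hx.add (tendsto_const_nhds (f := atTop (α := ℕ)) (x := m))
    simpa using this
  have h2 : (fun n : ℕ => (n:ℝ)⁻¹ * Stmt14.S D g0 n x + m)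
      =ᶠ[atTop] (fun n : ℕ => (n:ℝ)⁻¹ * Stmt14.S D g n x) := by
    filter_upwards [Filter.eventually_ge_atTop 1] with n hn
    have hnpos : (0:ℝ) < (n:ℝ) := by exact_mod_cast hn
    have hS := Stmt14.S_sub_const H g m n x
    rw [show Stmt14.S D g0 n x = Stmt14.S D g n x - (n:ℝ) * m from hS]
    field_simp
    ring
  exact Tendsto.congr' h2 h1
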